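/- Let {i : b_i + 1 < b_{i+1} and b_i < n} = {l_1 < l_2 < ... < l_u}, where b_{m+1} := n + 1. Then the minimal elements of the poset P of join-irreducible elements of Γ(X;γ) are exactly the tuples obtained from [b_1,...,b_m] by replacing b_{l_j} with b_{l_j} + 1, for j = 1,...,u. -/
import Mathlib


def IsTup (n m : ℕ) (c : Fin m → ℕ) : Prop :=
  StrictMono c ∧ ∀ i, 1 ≤ c i ∧ c i ≤ n

def Gamma (n m : ℕ) : Set (Fin m → ℕ) := {c | IsTup n m c}

def GammaF (n m : ℕ) (b : Fin m → ℕ) : Set (Fin m → ℕ) :=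
  {c | IsTup n m c ∧ b ≤ c}

/-- `prev c i` is `c (i-1)`, with the convention `c 0 = 0` (1-based indexing). -/
def prev {m : ℕ} (c : Fin m → ℕ) (i : Fin m) : ℕ :=
  if _ : i.1 = 0 then 0 else c ⟨i.1 - 1, Nat.lt_of_le_of_lt (Nat.sub_le _ _) i.2⟩

/-- the condition `c i > b i` and `c i > c (i-1) + 1`. -/
def Good {m : ℕ} (b c : Fin m → ℕ) (i : Fin m) : Prop :=
  b i < c i ∧ prev c i + 1 < c i

/-- `c` is join-irreducible in `Γ(X;γ)`: it covers exactly one element. -/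
def JoinIrr (n m : ℕ) (b : Fin m → ℕ) (c : ↥(GammaF n m b)) : Prop :=
  ∃! y : ↥(GammaF n m b), y ⋖ c

/-- the poset of join-irreducible elements of `Γ(X;γ)`. -/
def JP (n m : ℕ) (b : Fin m → ℕ) : Set ↥(GammaF n m b) := {c | JoinIrr n m b c}

/-- the map φ, computed at index `i` (0-based; 1-based index is `i+1`). -/
def phi (n m : ℕ) (c : Fin m → ℕ) (i : Fin m) : ℕ × ℕ :=
  (n - c i - (m - 1 - i.1), i.1)

/-- `l` is one of the indices `l_1, …, l_u`, i.e. `b l + 1 < b (l+1)` (with the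
convention `b (m+1) = n + 1`) and `b l < n`. -/
def GapIdx (n m : ℕ) (b : Fin m → ℕ) (l : Fin m) : Prop :=
  b l < n ∧ ∀ j : Fin m, j.1 = l.1 + 1 → b l + 1 < b j

section Aux

variable {n m : ℕ} {b : Fin m → ℕ}

/-- anything in `GammaF` squeezed below the atom `update b l (b l + 1)` is `b` or the atom. -/
lemma sandwich (l : Fin m) (y : Fin m → ℕ) (hy : y ∈ GammaF n m b)
    (hle : y ≤ Function.update b l (b l + 1)) :
    y = b ∨ y = Function.update b l (b l + 1) := by
  by_cases h : y l ≤ b l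
  · left
    funext i
    by_cases hi : i = l
    · subst hi; exact le_antisymm h (hy.2 i)
    · have := hle i
      rw [Function.update_of_ne hi] at this
      exact le_antisymm this (hy.2 i)
  · right
    funext i
    by_cases hi : i = l
    · rw [hi, Function.update_self]
      have h1 : y l ≤ Function.update b l (b l + 1) l := hle l
      rw [Function.update_self] at h1
      omega
    · have := hle i
      rw [Function.update_of_ne hi] at this ⊢
      exact le_antisymm this (hy.2 i)

lemma atom_mem (hb : b ∈ Gamma n m) (l : Fin m) (hl : GapIdx n m b l) :
    Function.update b l (b l + 1) ∈ GammaF n m b := by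
  refine ⟨⟨?_, ?_⟩, ?_⟩
  · intro i j hij
    by_cases hi : i = l <;> by_cases hj : j = l
    · subst hi; subst hj; exact absurd hij (lt_irrefl _)
    · rw [hi] at hij ⊢
      rw [Function.update_self, Function.update_of_ne hj]
      have hjm : (l : ℕ) + 1 < m := by
        have h0 := Fin.lt_def.mp hij
        have := j.2
        omega
      have h1 : b l + 1 < b ⟨(l : ℕ) + 1, hjm⟩ := hl.2 _ rfl
      have h2 : b ⟨(l : ℕ) + 1, hjm⟩ ≤ b j := hb.1.monotone (by rw [Fin.le_def]; exact Fin.lt_def.mp hij)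
      omega
    · subst hj
      rw [Function.update_of_ne hi, Function.update_self]
      exact lt_of_lt_of_le (hb.1 hij) (Nat.le_succ _)
    · rw [Function.update_of_ne hi, Function.update_of_ne hj]
      exact hb.1 hij
  · intro i
    by_cases hi : i = l
    · subst hi; rw [Function.update_self]
      exact ⟨Nat.succ_le_succ (Nat.zero_le _), hl.1⟩
    · rw [Function.update_of_ne hi]; exact hb.2 i
  · intro i
    by_cases hi : i = l
    · subst hi; rw [Function.update_self]; exact Nat.le_succ _
    · rw [Function.update_of_ne hi]

lemma exists_atom (hb : b ∈ Gamma n m) (c : Fin m → ℕ) (hc : c ∈ GammaF n m b)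
    (hne : c ≠ b) :
    ∃ l : Fin m, GapIdx n m b l ∧ Function.update b l (b l + 1) ≤ c := by
  have hS : (Finset.univ.filter (fun i : Fin m => b i < c i)).Nonempty := by
    by_contra h
    rw [Finset.not_nonempty_iff_eq_empty, Finset.filter_eq_empty_iff] at h
    exact hne (funext fun i => le_antisymm (le_of_not_gt (h (Finset.mem_univ i))) (hc.2 i))
  obtain ⟨l, hlS, hlmax⟩ : ∃ l : Fin m, b l < c l ∧ ∀ j, b j < c j → j ≤ l :=
    ⟨(Finset.univ.filter (fun i : Fin m => b i < c i)).max' hS,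
      (Finset.mem_filter.mp (Finset.max'_mem _ hS)).2,
      fun j hj => Finset.le_max' _ j (Finset.mem_filter.mpr ⟨Finset.mem_univ j, hj⟩)⟩
  refine ⟨l, ⟨lt_of_lt_of_le hlS (hc.1.2 l).2, ?_⟩, ?_⟩
  · intro j hj
    have hjl : l < j := by rw [Fin.lt_def]; omega
    have hcj : c j = b j := by
      have h1 : b j ≤ c j := hc.2 j
      by_cases h2 : b j < c j
      · exact absurd (hlmax j h2) (not_le_of_gt hjl)
      · omega
    have := hc.1.1 hjl
    omega
  · intro i
    by_cases hi : i = l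
    · rw [hi, Function.update_self]
      exact hlS
    · rw [Function.update_of_ne hi]; exact hc.2 i

lemma bottom_not_JP (y : ↥(GammaF n m b)) (hy : (y : Fin m → ℕ) = b) :
    y ∉ JP n m b := by
  intro hmem
  obtain ⟨z, hz, -⟩ := hmem
  have h1 : (z : Fin m → ℕ) < (y : Fin m → ℕ) := Subtype.coe_lt_coe.2 hz.1
  rw [hy] at h1
  exact absurd z.2.2 h1.not_ge

lemma atom_JP (hb : b ∈ Gamma n m) (l : Fin m) (hl : GapIdx n m b l)
    (a : ↥(GammaF n m b)) (ha : (a : Fin m → ℕ) = Function.update b l (b l + 1)) :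
    a ∈ JP n m b := by
  have hbG : b ∈ GammaF n m b := ⟨hb, le_refl b⟩
  have hba : b < (a : Fin m → ℕ) := by
    rw [ha]
    refine lt_of_le_of_ne (fun i => ?_) (fun h => ?_)
    · by_cases hi : i = l
      · subst hi; rw [Function.update_self]; exact Nat.le_succ _
      · rw [Function.update_of_ne hi]
    · have := congrFun h l
      rw [Function.update_self] at this
      omega
  refine ⟨⟨b, hbG⟩, ⟨?_, ?_⟩, ?_⟩
  · exact Subtype.coe_lt_coe.1 hba
  · intro z hz1 hz2
    have hzle : (z : Fin m → ℕ) ≤ Function.update b l (b l + 1) := by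
      rw [← ha]; exact Subtype.coe_le_coe.2 hz2.le
    rcases sandwich l z z.2 hzle with h | h
    · exact absurd (Subtype.coe_lt_coe.2 hz1) (by rw [h]; exact lt_irrefl b)
    · exact absurd (Subtype.coe_lt_coe.2 hz2) (by rw [h, ha]; exact lt_irrefl _)
  · intro y hy
    have hyle : (y : Fin m → ℕ) ≤ Function.update b l (b l + 1) := by
      rw [← ha]; exact Subtype.coe_le_coe.2 hy.1.le
    rcases sandwich l y y.2 hyle with h | h
    · exact Subtype.ext h
    · exact absurd (Subtype.coe_lt_coe.2 hy.1) (by rw [h, ha]; exact lt_irrefl _)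

end Aux

theorem stmt7 (n m : ℕ) (hm : 1 ≤ m) (hmn : m ≤ n) (b : Fin m → ℕ)
    (hb : b ∈ Gamma n m) (c : ↥(GammaF n m b)) :
    Minimal (· ∈ JP n m b) c ↔
      ∃ l : Fin m, GapIdx n m b l ∧
        (c : Fin m → ℕ) = Function.update b l (b l + 1) := by
  constructor
  · rintro ⟨hcJP, hmin⟩
    have hcne : (c : Fin m → ℕ) ≠ b := fun h => bottom_not_JP c h hcJP
    obtain ⟨l, hl, hle⟩ := exists_atom hb (c : Fin m → ℕ) c.2 hcne
    set a : ↥(GammaF n m b) := ⟨Function.update b l (b l + 1), atom_mem hb l hl⟩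
    have haJP : a ∈ JP n m b := atom_JP hb l hl a rfl
    have hac : a ≤ c := Subtype.coe_le_coe.1 hle
    have hca : c ≤ a := hmin haJP hac
    exact ⟨l, hl, congrArg Subtype.val (le_antisymm hca hac)⟩
  · rintro ⟨l, hl, hc⟩
    refine ⟨atom_JP hb l hl c hc, ?_⟩
    intro y hy hyc
    have hyle : (y : Fin m → ℕ) ≤ Function.update b l (b l + 1) := by
      rw [← hc]; exact Subtype.coe_le_coe.2 hyc
    rcases sandwich l (y : Fin m → ℕ) y.2 hyle with h | h
    · exact absurd hy (bottom_not_JP y h)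
    · exact le_of_eq (Subtype.ext (hc.trans h.symm))
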